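/- arXiv:1712.03402 — 4 statements merged into one kernel-verified Lean document; each statement's English description precedes it below -/
import Mathlib

section
/- For any z, w in the open unit disk, |1 - (1-|z|^2)(1-|w|^2)/(1-conj(w)z)^2| ≤ 3 ρ(z,w). -/
open Complex

theorem lemma21 (z w : ℂ) (hz : ‖z‖ < 1) (hw : ‖w‖ < 1) :
    ‖(1 - ((1 - ‖z‖ ^ 2) * (1 - ‖w‖ ^ 2) : ℝ)
        / (1 - (starRingEnd ℂ) w * z) ^ 2)‖
      ≤ 3 * ‖(z - w) / (1 - (starRingEnd ℂ) w * z)‖ := by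
  set d : ℂ := 1 - (starRingEnd ℂ) w * z with hd
  have habs : ‖(starRingEnd ℂ) w * z‖ < 1 := by
    rw [norm_mul, Complex.norm_conj]
    nlinarith [norm_nonneg z, norm_nonneg w]
  have hdne : d ≠ 0 := by
    intro h
    have h1 : (starRingEnd ℂ) w * z = 1 := by
      have := hd.symm.trans h
      linear_combination -this
    rw [h1] at habs; simp at habs
  have hdpos : 0 < ‖d‖ := by
    simpa [norm_pos_iff] using hdne
  have hcast : (((1 - ‖z‖ ^ 2) * (1 - ‖w‖ ^ 2) : ℝ) : ℂ)
      = (1 - z * (starRingEnd ℂ) z) * (1 - w * (starRingEnd ℂ) w) := by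
    rw [Complex.mul_conj, Complex.mul_conj]
    push_cast [Complex.sq_norm]
    ring
  have key : (1 : ℂ) - (((1 - ‖z‖ ^ 2) * (1 - ‖w‖ ^ 2) : ℝ)) / d ^ 2
      = (w * (starRingEnd ℂ) z - (starRingEnd ℂ) w * z) / d
        + (z - w) * (starRingEnd ℂ) (z - w) / d ^ 2 := by
    rw [hcast, map_sub]
    field_simp
    ring
  -- normSq identity : normSq d - normSq (z - w) = (1 - normSq z) * (1 - normSq w)
  have e : Complex.normSq d - Complex.normSq (z - w)
      = (1 - Complex.normSq z) * (1 - Complex.normSq w) := by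
    have h2 : ((Complex.normSq d - Complex.normSq (z - w) : ℝ) : ℂ)
        = (((1 - Complex.normSq z) * (1 - Complex.normSq w) : ℝ) : ℂ) := by
      push_cast
      simp only [← Complex.mul_conj]
      simp only [hd, map_sub, map_mul, map_one, Complex.conj_conj]
      ring
    exact_mod_cast h2
  have hnz : Complex.normSq z < 1 := by
    rw [← Complex.sq_norm]; nlinarith [norm_nonneg z]
  have hnw : Complex.normSq w < 1 := by
    rw [← Complex.sq_norm]; nlinarith [norm_nonneg w]
  have hle : Complex.normSq (z - w) ≤ Complex.normSq d := by nlinarith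
  have habsle : ‖z - w‖ ≤ ‖d‖ := by
    rw [Complex.norm_def, Complex.norm_def]
    exact Real.sqrt_le_sqrt hle
  have hrho1 : ‖(z - w) / d‖ ≤ 1 := by
    rw [norm_div]
    exact div_le_one_of_le₀ habsle (le_of_lt hdpos)
  have hrho0 : 0 ≤ ‖(z - w) / d‖ := norm_nonneg _
  -- first term bound
  have hnum : ‖w * (starRingEnd ℂ) z - (starRingEnd ℂ) w * z‖
      ≤ 2 * ‖z - w‖ := by
    have hid : w * (starRingEnd ℂ) z - (starRingEnd ℂ) w * z
        = (starRingEnd ℂ) w * (w - z) + w * (starRingEnd ℂ) (z - w) := by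
      rw [map_sub]; ring
    rw [hid]
    calc ‖(starRingEnd ℂ) w * (w - z) + w * (starRingEnd ℂ) (z - w)‖
        ≤ ‖(starRingEnd ℂ) w * (w - z)‖ + ‖w * (starRingEnd ℂ) (z - w)‖ :=
          norm_add_le _ _
      _ = ‖w‖ * ‖z - w‖ + ‖w‖ * ‖z - w‖ := by
          rw [norm_mul, norm_mul, Complex.norm_conj, Complex.norm_conj, ← norm_neg (w - z)]
          ring_nf
      _ ≤ 2 * ‖z - w‖ := by nlinarith [norm_nonneg (z - w)]
  have h1 : ‖(w * (starRingEnd ℂ) z - (starRingEnd ℂ) w * z) / d‖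
      ≤ 2 * ‖(z - w) / d‖ := by
    rw [norm_div, norm_div, div_le_iff₀ hdpos, mul_assoc,
      div_mul_cancel₀ _ (ne_of_gt hdpos)]
    exact hnum
  have h2 : ‖(z - w) * (starRingEnd ℂ) (z - w) / d ^ 2‖
      ≤ ‖(z - w) / d‖ := by
    have : ‖(z - w) * (starRingEnd ℂ) (z - w) / d ^ 2‖
        = ‖(z - w) / d‖ * ‖(z - w) / d‖ := by
      rw [norm_div, norm_mul, Complex.norm_conj, norm_div, norm_pow]
      ring
    rw [this]
    nlinarith
  rw [key]
  calc ‖(w * (starRingEnd ℂ) z - (starRingEnd ℂ) w * z) / d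
        + (z - w) * (starRingEnd ℂ) (z - w) / d ^ 2‖
      ≤ ‖(w * (starRingEnd ℂ) z - (starRingEnd ℂ) w * z) / d‖
        + ‖(z - w) * (starRingEnd ℂ) (z - w) / d ^ 2‖ := norm_add_le _ _
    _ ≤ 3 * ‖(z - w) / d‖ := by linarith
end

section
/- For any z, w in the open unit disk, ρ(z,w)^2 ≤ ♭(z,w), where ♭(z,w) = sup over analytic f on D with Bloch seminorm at most 1 of |(1-|z|^2) f'(z) - (1-|w|^2) f'(w)|. -/
open Complex Metric

private lemma normSq_identity (z w : ℂ) :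
    Complex.normSq (1 - (starRingEnd ℂ) w * z)
      = Complex.normSq (z - w) + (1 - Complex.normSq z) * (1 - Complex.normSq w) := by
  simp [Complex.normSq_apply, Complex.mul_re, Complex.mul_im, Complex.sub_re, Complex.sub_im,
    Complex.one_re, Complex.one_im]
  ring

private lemma hasDerivMob (w ζ : ℂ) (hw : ‖w‖ < 1) (hζ : ‖ζ‖ < 1) :
    HasDerivAt (fun x => (x - w) / (1 - (starRingEnd ℂ) w * x))
      ((1 - (starRingEnd ℂ) w * w) / (1 - (starRingEnd ℂ) w * ζ)^2) ζ := by
  have hne : (1 - (starRingEnd ℂ) w * ζ) ≠ 0 := by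
    intro h
    rw [sub_eq_zero] at h
    have h2 : ‖(starRingEnd ℂ) w * ζ‖ < 1 := by
      rw [norm_mul, Complex.norm_conj]
      nlinarith [norm_nonneg w, norm_nonneg ζ]
    rw [← h] at h2
    simp at h2
  have h1 : HasDerivAt (fun x : ℂ => x - w) 1 ζ := (hasDerivAt_id ζ).sub_const w
  have h2 : HasDerivAt (fun x : ℂ => 1 - (starRingEnd ℂ) w * x) (-(starRingEnd ℂ) w) ζ := by
    simpa using (((hasDerivAt_id ζ).const_mul ((starRingEnd ℂ) w)).const_sub 1)
  have h3 := h1.div h2 hne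
  exact h3.congr_deriv (by ring)
theorem rho_sq_le_flat (z w : ℂ) (hz : ‖z‖ < 1) (hw : ‖w‖ < 1) :
    ‖(z - w) / (1 - (starRingEnd ℂ) w * z)‖ ^ 2
      ≤ sSup {x : ℝ | ∃ f : ℂ → ℂ, DifferentiableOn ℂ f (ball (0 : ℂ) 1) ∧
          (∀ ζ : ℂ, ‖ζ‖ < 1 → (1 - ‖ζ‖ ^ 2) * ‖deriv f ζ‖ ≤ 1) ∧
          x = ‖((1 - ‖z‖ ^ 2 : ℝ) : ℂ) * deriv f z
            - ((1 - ‖w‖ ^ 2 : ℝ) : ℂ) * deriv f w‖} := by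
  set c := (starRingEnd ℂ) w with hc
  set f : ℂ → ℂ := fun x => (x - w) / (1 - c * x) with hf
  have hwz : ‖w‖ ^ 2 < 1 := by nlinarith [norm_nonneg w]
  have hzz : ‖z‖ ^ 2 < 1 := by nlinarith [norm_nonneg z]
  have hcw : c * w = ((‖w‖ ^ 2 : ℝ) : ℂ) := by
    rw [hc, mul_comm, Complex.mul_conj]
    norm_cast
    exact (Complex.sq_norm w).symm
  have hcwne : (1 : ℂ) - c * w ≠ 0 := by
    rw [hcw, sub_ne_zero]
    intro h
    have : (1 : ℝ) = ‖w‖ ^ 2 := by exact_mod_cast congrArg Complex.re h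
    linarith
  -- derivatives
  have hdz := hasDerivMob w z hw hz
  have hdw := hasDerivMob w w hw hw
  have hDz : deriv f z = (1 - c * w) / (1 - c * z)^2 := hdz.deriv
  have hDw : deriv f w = (1 - c * w) / (1 - c * w)^2 := hdw.deriv
  have hDgen : ∀ ζ : ℂ, ‖ζ‖ < 1 → deriv f ζ = (1 - c * w) / (1 - c * ζ)^2 :=
    fun ζ hζ => (hasDerivMob w ζ hw hζ).deriv
  -- the value B = 1
  have hBone : ((1 - ‖w‖ ^ 2 : ℝ) : ℂ) * deriv f w = 1 := by
    have h1 : ((1 - ‖w‖ ^ 2 : ℝ) : ℂ) = 1 - c * w := by rw [hcw]; push_cast; ring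
    rw [hDw, h1]
    field_simp
  -- nonvanishing denominators
  have hne : ∀ ζ : ℂ, ‖ζ‖ < 1 → (1 : ℂ) - c * ζ ≠ 0 := by
    intro ζ hζ h
    rw [sub_eq_zero] at h
    have h2 : ‖c * ζ‖ < 1 := by
      rw [hc, norm_mul, Complex.norm_conj]
      nlinarith [norm_nonneg w, norm_nonneg ζ]
    rw [← h] at h2
    simp at h2
  -- modulus of normalized derivative
  have habs : ∀ ζ : ℂ, ‖ζ‖ < 1 →
      (1 - ‖ζ‖ ^ 2) * ‖deriv f ζ‖
        = (1 - ‖ζ‖ ^ 2) * (1 - ‖w‖ ^ 2) / Complex.normSq (1 - c * ζ) := by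
    intro ζ hζ
    rw [hDgen ζ hζ, norm_div, norm_pow]
    rw [show ‖1 - c * w‖ = 1 - ‖w‖ ^ 2 by
      rw [hcw]
      rw [show (1 : ℂ) - ((‖w‖ ^ 2 : ℝ) : ℂ) = ((1 - ‖w‖ ^ 2 : ℝ) : ℂ) by
        push_cast; ring]
      rw [Complex.norm_real, Real.norm_eq_abs, abs_of_pos (by linarith)]]
    rw [← Complex.sq_norm]
    ring
  -- Bloch seminorm bound
  have hBloch : ∀ ζ : ℂ, ‖ζ‖ < 1 →
      (1 - ‖ζ‖ ^ 2) * ‖deriv f ζ‖ ≤ 1 := by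
    intro ζ hζ
    rw [habs ζ hζ]
    have hpos : 0 < Complex.normSq (1 - c * ζ) :=
      Complex.normSq_pos.mpr (hne ζ hζ)
    rw [div_le_one hpos]
    have hid := normSq_identity ζ w
    rw [← hc] at hid
    rw [Complex.sq_norm, Complex.sq_norm, hid]
    nlinarith [Complex.normSq_nonneg (ζ - w)]
  -- differentiability on the ball
  have hdiff : DifferentiableOn ℂ f (ball (0 : ℂ) 1) := by
    intro x hx
    simp only [mem_ball, dist_zero_right] at hx
    exact ((hasDerivMob w x hw hx).differentiableAt).differentiableWithinAt
  -- the element of the set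
  set A : ℂ := ((1 - ‖z‖ ^ 2 : ℝ) : ℂ) * deriv f z with hA
  have hmem : ‖A - 1‖ ∈ {x : ℝ | ∃ f : ℂ → ℂ, DifferentiableOn ℂ f (ball (0 : ℂ) 1) ∧
          (∀ ζ : ℂ, ‖ζ‖ < 1 → (1 - ‖ζ‖ ^ 2) * ‖deriv f ζ‖ ≤ 1) ∧
          x = ‖((1 - ‖z‖ ^ 2 : ℝ) : ℂ) * deriv f z
            - ((1 - ‖w‖ ^ 2 : ℝ) : ℂ) * deriv f w‖} := by
    exact ⟨f, hdiff, hBloch, by rw [hBone, hA]⟩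
  -- bounded above
  have hbdd : BddAbove {x : ℝ | ∃ f : ℂ → ℂ, DifferentiableOn ℂ f (ball (0 : ℂ) 1) ∧
          (∀ ζ : ℂ, ‖ζ‖ < 1 → (1 - ‖ζ‖ ^ 2) * ‖deriv f ζ‖ ≤ 1) ∧
          x = ‖((1 - ‖z‖ ^ 2 : ℝ) : ℂ) * deriv f z
            - ((1 - ‖w‖ ^ 2 : ℝ) : ℂ) * deriv f w‖} := by
    refine ⟨2, ?_⟩
    rintro x ⟨g, _, hg, rfl⟩
    have h1 : ‖((1 - ‖z‖ ^ 2 : ℝ) : ℂ) * deriv g z‖ ≤ 1 := by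
      rw [norm_mul, Complex.norm_real, Real.norm_eq_abs, abs_of_pos (by linarith)]
      exact hg z hz
    have h2 : ‖((1 - ‖w‖ ^ 2 : ℝ) : ℂ) * deriv g w‖ ≤ 1 := by
      rw [norm_mul, Complex.norm_real, Real.norm_eq_abs, abs_of_pos (by linarith)]
      exact hg w hw
    calc ‖_‖ ≤ _ + _ := norm_sub_le _ _
      _ ≤ 2 := by linarith
  -- lower bound: ρ² ≤ |A - 1|
  have hρ : ‖(z - w) / (1 - c * z)‖ ^ 2 ≤ ‖A - 1‖ := by
    have hnez := hne z hz
    have hposz : 0 < Complex.normSq (1 - c * z) := Complex.normSq_pos.mpr hnez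
    have hAabs : ‖A‖
        = (1 - ‖z‖ ^ 2) * (1 - ‖w‖ ^ 2) / Complex.normSq (1 - c * z) := by
      rw [hA, norm_mul, Complex.norm_real, Real.norm_eq_abs, abs_of_pos (by linarith)]
      have := habs z hz
      have hf1 : (1 - ‖z‖ ^ 2) ≠ 0 := by nlinarith
      field_simp at this ⊢
      linarith [this]
    have hρval : ‖(z - w) / (1 - c * z)‖ ^ 2
        = Complex.normSq (z - w) / Complex.normSq (1 - c * z) := by
      rw [norm_div, div_pow, Complex.sq_norm, Complex.sq_norm]
    have key : ‖(z - w) / (1 - c * z)‖ ^ 2 = 1 - ‖A‖ := by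
      rw [hρval, hAabs]
      have hid := normSq_identity z w
      rw [← hc] at hid
      rw [Complex.sq_norm, Complex.sq_norm]
      rw [eq_sub_iff_add_eq, ← add_div, div_eq_one_iff_eq hposz.ne']
      linarith [hid]
    rw [key]
    calc 1 - ‖A‖ = ‖(1 : ℂ)‖ - ‖A‖ := by simp
      _ ≤ ‖1 - A‖ := by
          have := norm_sub_norm_le (1 : ℂ) A
          simpa using this
      _ = ‖A - 1‖ := norm_sub_rev 1 A
  exact le_trans hρ (le_csSup hbdd hmem)
end

section
/- For any z, w in the open unit disk, ♭(z,w) ≤ 18 ρ(z,w), where ♭(z,w) = sup over analytic f with Bloch seminorm at most 1 of |(1-|z|^2) f'(z) - (1-|w|^2) f'(w)|. -/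
open Complex Metric Real

lemma cauchy_diff_est {g : ℂ → ℂ} {w z : ℂ} {r M : ℝ}
    (hg : DiffContOnCl ℂ g (ball w r))
    (hzw : dist z w < r)
    (hM : ∀ η ∈ sphere w r, ‖g η‖ ≤ M) :
    ‖g z - g w‖ ≤ M * dist z w / (r - dist z w) := by
  have hr : 0 < r := lt_of_le_of_lt dist_nonneg hzw
  have hd0 : (0:ℝ) ≤ dist z w := dist_nonneg
  have hM0 : 0 ≤ M := by
    refine le_trans (norm_nonneg _) (hM (w + r) ?_)
    simp [Complex.dist_eq, abs_of_pos hr]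
  rcases eq_or_ne z w with rfl | hne
  · simp [hM0, le_div_iff₀ hr, mul_nonneg hM0]
  set d := dist z w with hd
  have hdpos : 0 < d := dist_pos.mpr hne
  have hzmem : z ∈ ball w r := mem_ball.mpr hzw
  have hwmem : w ∈ ball w r := mem_ball_self hr
  have I1 := hg.circleIntegral_sub_inv_smul hzmem
  have I2 := hg.circleIntegral_sub_inv_smul hwmem
  have hcont : ContinuousOn g (sphere w r) :=
    hg.continuousOn_ball.mono sphere_subset_closedBall
  have hnez : ∀ η ∈ sphere w r, η - z ≠ 0 := by
    intro η hη h
    rw [sub_eq_zero] at h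
    rw [mem_sphere, h] at hη
    exact absurd hη (ne_of_lt hzw)
  have hnew : ∀ η ∈ sphere w r, η - w ≠ 0 := by
    intro η hη h
    rw [sub_eq_zero] at h
    rw [mem_sphere, h] at hη
    simp at hη; linarith
  have int1 : CircleIntegrable (fun η => (η - z)⁻¹ • g η) w r := by
    refine ContinuousOn.circleIntegrable hr.le ?_
    exact (((continuousOn_id.sub continuousOn_const).inv₀ hnez).smul hcont)
  have int2 : CircleIntegrable (fun η => (η - w)⁻¹ • g η) w r := by
    refine ContinuousOn.circleIntegrable hr.le ?_
    exact (((continuousOn_id.sub continuousOn_const).inv₀ hnew).smul hcont)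
  have key : (∮ η in C(w, r), ((η - z)⁻¹ - (η - w)⁻¹) • g η)
      = (2 * π * Complex.I : ℂ) • (g z - g w) := by
    have heq : (fun η => ((η - z)⁻¹ - (η - w)⁻¹) • g η)
        = fun η => (η - z)⁻¹ • g η - (η - w)⁻¹ • g η := by
      funext η; rw [sub_smul]
    rw [heq, circleIntegral.integral_sub int1 int2, I1, I2, ← smul_sub]
  set C : ℝ := M * d / ((r - d) * r) with hC
  have hrd : 0 < r - d := by linarith
  have hbound : ∀ η ∈ sphere w r, ‖((η - z)⁻¹ - (η - w)⁻¹) • g η‖ ≤ C := by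
    intro η hη
    have hηw : ‖η - w‖ = r := by rwa [mem_sphere, Complex.dist_eq] at hη
    have h2 : d = ‖z - w‖ := hd.trans (Complex.dist_eq z w)
    have hηz : r - d ≤ ‖η - z‖ := by
      have h1 : ‖η - w‖ ≤ ‖η - z‖ + ‖z - w‖ :=
        norm_sub_le_norm_sub_add_norm_sub η z w
      linarith [h1, hηw.symm.le, h2.symm.le]
    have hrdpos : 0 < r - d := by linarith
    have hdiff : (η - z)⁻¹ - (η - w)⁻¹ = (z - w) * ((η - z)⁻¹ * (η - w)⁻¹) := by
      field_simp [hnez η hη, hnew η hη]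
      ring
    have e1 : ‖((η - z)⁻¹ - (η - w)⁻¹) • g η‖
        = d * ((‖η - z‖)⁻¹ * (‖η - w‖)⁻¹) * ‖g η‖ := by
      rw [norm_smul, hdiff, norm_mul, norm_mul,
        norm_inv, norm_inv, ← h2]
    rw [e1, hηw]
    have h1 : (‖η - z‖)⁻¹ ≤ (r - d)⁻¹ :=
      inv_anti₀ hrdpos hηz
    calc d * ((‖η - z‖)⁻¹ * r⁻¹) * ‖g η‖
        ≤ d * ((r - d)⁻¹ * r⁻¹) * M := by
          have := hM η hη
          gcongr
      _ = C := by rw [hC]; field_simp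
  have hnorm := circleIntegral.norm_integral_le_of_norm_le_const hr.le hbound
  rw [key] at hnorm
  have h2pi : ‖(2 * π * Complex.I : ℂ)‖ = 2 * π := by
    simp [abs_of_pos Real.pi_pos]
  rw [norm_smul, h2pi] at hnorm
  have : ‖g z - g w‖ ≤ r * C := by
    nlinarith [Real.two_pi_pos, norm_nonneg (g z - g w)]

  calc ‖g z - g w‖ ≤ r * C := this
    _ = M * d / (r - d) := by rw [hC]; field_simp

set_option maxHeartbeats 2000000 in
lemma key_est {f : ℂ → ℂ} (hf : DifferentiableOn ℂ f (ball (0:ℂ) 1))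
    (hb : ∀ ζ : ℂ, ‖ζ‖ < 1 → (1 - ‖ζ‖ ^ 2) * ‖deriv f ζ‖ ≤ 1)
    {z w : ℂ} (hz : ‖z‖ < 1) (hw : ‖w‖ < 1)
    (hwz : ‖w‖ ≤ ‖z‖) :
    ‖((1 - ‖z‖ ^ 2 : ℝ) : ℂ) * deriv f z
            - ((1 - ‖w‖ ^ 2 : ℝ) : ℂ) * deriv f w‖
      ≤ 18 * ‖(z - w) / (1 - (starRingEnd ℂ) w * z)‖ := by
  set az := ‖z‖ with haz
  set aw := ‖w‖ with hawdef
  set ρ := ‖(z - w) / (1 - (starRingEnd ℂ) w * z)‖ with hρ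
  clear_value az aw ρ
  have hz' : ‖z‖ < 1 := haz ▸ hz
  have hw' : ‖w‖ < 1 := hawdef ▸ hw
  have haw0 : 0 ≤ aw := by rw [hawdef]; exact norm_nonneg w
  have haz0 : 0 ≤ az := by rw [haz]; exact norm_nonneg z
  have hρ0 : 0 ≤ ρ := by rw [hρ]; exact norm_nonneg _
  have hz2 : 0 < 1 - az ^ 2 := by nlinarith
  have hw2 : 0 < 1 - aw ^ 2 := by nlinarith
  by_cases hcase : (1:ℝ)/9 ≤ ρ
  · -- trivial case
    have h1 : ‖((1 - az ^ 2 : ℝ) : ℂ) * deriv f z‖ ≤ 1 := by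
      rw [norm_mul, Complex.norm_real, Real.norm_eq_abs, _root_.abs_of_nonneg hz2.le]
      rw [haz]
      exact hb z hz'
    have h2 : ‖((1 - aw ^ 2 : ℝ) : ℂ) * deriv f w‖ ≤ 1 := by
      rw [norm_mul, Complex.norm_real, Real.norm_eq_abs, _root_.abs_of_nonneg hw2.le]
      rw [hawdef]
      exact hb w hw'
    have h3 := norm_sub_le (((1 - az ^ 2 : ℝ) : ℂ) * deriv f z)
      (((1 - aw ^ 2 : ℝ) : ℂ) * deriv f w)

    linarith
  push_neg at hcase
  -- main case : ρ < 1/9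
  set t := 1 - aw ^ 2 with ht_def
  clear_value t
  have ht : 0 < t := hw2
  set d := ‖z - w‖ with hd_def
  clear_value d
  have hd0 : 0 ≤ d := by rw [hd_def]; exact norm_nonneg _
  set B := (1 : ℂ) - (starRingEnd ℂ) w * z with hB_def
  clear_value B
  have hB0 : 1 - aw * az ≤ ‖B‖ := by
    rw [hB_def]
    have h1 := norm_sub_norm_le (1 : ℂ) ((starRingEnd ℂ) w * z)
    rw [norm_one, norm_mul, Complex.norm_conj,
      ← hawdef, ← haz] at h1
    exact h1
  have hBpos : 0 < ‖B‖ := by nlinarith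
  have habsB_le : ‖B‖ ≤ t + d := by
    have hB_eq : B = ((t : ℝ) : ℂ) + (starRingEnd ℂ) w * (w - z) := by
      rw [hB_def, ht_def]
      have h1 : ((aw : ℝ) : ℂ) ^ 2 = (starRingEnd ℂ) w * w := by
        rw [mul_comm, Complex.mul_conj, hawdef]
        norm_cast
        rw [Complex.sq_norm]
      push_cast
      rw [h1]
      ring
    calc ‖B‖ ≤ ‖((t : ℝ) : ℂ)‖ + ‖(starRingEnd ℂ) w * (w - z)‖ := by
          rw [hB_eq]; exact norm_add_le _ _
      _ = t + aw * ‖w - z‖ := by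
          rw [Complex.norm_real, Real.norm_eq_abs, _root_.abs_of_nonneg ht.le, norm_mul, Complex.norm_conj,
            ← hawdef]
      _ = t + aw * d := by rw [norm_sub_rev w z, ← hd_def]
      _ ≤ t + d := by nlinarith
  have hd_eq : d = ρ * ‖B‖ := by
    rw [hρ, norm_div, div_mul_cancel₀ _ (ne_of_gt hBpos)]
    exact hd_def
  have hdle : d ≤ ρ * (t + d) :=
    calc d = ρ * ‖B‖ := hd_eq
      _ ≤ ρ * (t + d) := mul_le_mul_of_nonneg_left habsB_le hρ0
  have hdt : d ≤ t / 8 := by nlinarith [mul_le_mul_of_nonneg_right hcase.le (by linarith : (0:ℝ) ≤ t + d)]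
  set r := 5 * t / 16 with hr_def
  clear_value r
  have hr : 0 < r := by rw [hr_def]; positivity
  set g := deriv f with hg_def
  have hg : DifferentiableOn ℂ g (ball (0:ℂ) 1) :=
    ((hf.analyticOnNhd isOpen_ball).deriv).differentiableOn
  have hawr : aw + r < 1 := by
    rw [hr_def, ht_def]
    nlinarith
  have hsub : closedBall w r ⊆ ball (0:ℂ) 1 := by
    intro η hη
    rw [mem_closedBall, Complex.dist_eq] at hη
    have h2 : ‖η‖ ≤ aw + r := by
      rw [hawdef]
      calc ‖η‖ = ‖w + (η - w)‖ := by ring_nf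
        _ ≤ ‖w‖ + ‖η - w‖ := norm_add_le _ _
        _ ≤ ‖w‖ + r := by linarith
    rw [mem_ball, Complex.dist_eq, sub_zero]
    linarith
  have hdiffcl : DiffContOnCl ℂ g (ball w r) := hg.diffContOnCl_ball hsub
  have hzb : dist z w < r := by
    rw [Complex.dist_eq, ← hd_def]; rw [hr_def]; linarith
  have hMs : ∀ η ∈ sphere w r, ‖g η‖ ≤ 8 / (3 * t) := by
    intro η hη
    rw [mem_sphere, Complex.dist_eq] at hη
    have h2 : ‖η‖ ≤ aw + r := by
      rw [hawdef]
      calc ‖η‖ = ‖w + (η - w)‖ := by ring_nf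
        _ ≤ ‖w‖ + ‖η - w‖ := norm_add_le _ _
        _ ≤ ‖w‖ + r := by rw [hη]
    have hη1 : ‖η‖ < 1 := by linarith
    have h3' : 3 * t / 8 ≤ 1 - (aw + r) ^ 2 := by
      rw [hr_def, ht_def]
      nlinarith [mul_nonneg (mul_nonneg (sq_nonneg (1 - aw)) (by linarith : (0:ℝ) ≤ aw + 1))
        (by linarith : (0:ℝ) ≤ 135 - 25 * aw)]
    have hsq : ‖η‖ ^ 2 ≤ (aw + r) ^ 2 :=
      pow_le_pow_left₀ (norm_nonneg η) h2 2
    have h3 : 3 * t / 8 ≤ 1 - ‖η‖ ^ 2 := by linarith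
    have hbη := hb η hη1
    have habsg : 0 ≤ ‖g η‖ := norm_nonneg _
    rw [le_div_iff₀ (by positivity : (0:ℝ) < 3 * t)]
    linarith [mul_le_mul_of_nonneg_right h3 habsg, hbη]
  have hD := cauchy_diff_est hdiffcl hzb hMs
  rw [Complex.dist_eq, ← hd_def] at hD
  have hrd : 3 * t / 16 ≤ r - d := by rw [hr_def]; linarith
  have hD2 : ‖g z - g w‖ ≤ 128 * d / (9 * t ^ 2) := by
    have step : 8 / (3 * t) * d / (r - d) ≤ 8 / (3 * t) * d / (3 * t / 16) := by
      gcongr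
    have heq : 8 / (3 * t) * d / (3 * t / 16) = 128 * d / (9 * t ^ 2) := by
      field_simp
      ring
    rw [← heq]
    exact hD.trans step
  set δ := az ^ 2 - aw ^ 2 with hδ_def
  clear_value δ
  have hδ0 : 0 ≤ δ := by
    rw [hδ_def]
    linarith [pow_le_pow_left₀ haw0 hwz 2]
  have hδt : δ ≤ t := by
    rw [hδ_def, ht_def]
    have h1 : az ^ 2 ≤ 1 ^ 2 := pow_le_pow_left₀ haz0 hz.le 2
    rw [one_pow] at h1
    linarith
  have hδ2d : δ ≤ 2 * d := by
    have h1 : az - aw ≤ d := by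
      have := norm_sub_norm_le z w
      rw [← haz, ← hawdef, ← hd_def] at this
      exact this
    rw [hδ_def]
    have h2 : az ^ 2 - aw ^ 2 = (az - aw) * (az + aw) := by ring
    have h3 : (az - aw) * (az + aw) ≤ d * 2 :=
      mul_le_mul h1 (by linarith) (by linarith) hd0
    linarith
  have hgw : ‖g w‖ ≤ 1 / t := by
    have hbw := hb w hw'
    rw [le_div_iff₀ ht]
    rw [← hawdef] at hbw
    nlinarith [norm_nonneg (g w)]
  -- decomposition
  have hsplit : ((1 - az ^ 2 : ℝ) : ℂ) * g z - ((1 - aw ^ 2 : ℝ) : ℂ) * g w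
      = ((1 - az ^ 2 : ℝ) : ℂ) * (g z - g w) + (((aw ^ 2 - az ^ 2 : ℝ)) : ℂ) * g w := by
    push_cast; ring
  have habs1 : ‖((1 - az ^ 2 : ℝ) : ℂ) * (g z - g w)‖
      = (t - δ) * ‖g z - g w‖ := by
    rw [norm_mul, Complex.norm_real, Real.norm_eq_abs, _root_.abs_of_nonneg hz2.le]
    congr 1
    rw [ht_def, hδ_def]; ring
  have habs2 : ‖(((aw ^ 2 - az ^ 2 : ℝ)) : ℂ) * g w‖ = δ * ‖g w‖ := by
    rw [norm_mul, Complex.norm_real, Real.norm_eq_abs, _root_.abs_of_nonpos (by linarith [pow_le_pow_left₀ haw0 hwz 2] : (aw ^ 2 - az ^ 2 : ℝ) ≤ 0)]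
    congr 1
    rw [hδ_def]; ring
  have htδ : 0 ≤ t - δ := by
    have : t - δ = 1 - az ^ 2 := by rw [ht_def, hδ_def]; ring
    linarith [hz2, this ▸ hz2.le]
  have hmain : (t - δ) * ‖g z - g w‖ + δ * ‖g w‖
      ≤ (t - δ) * (128 * d / (9 * t ^ 2)) + δ * (1 / t) := by
    gcongr
  have halg : (t - δ) * (128 * d / (9 * t ^ 2)) + δ * (1 / t) ≤ 18 * ρ := by
    have h9t2 : 0 < 9 * t ^ 2 := by positivity
    have hcomb : (t - δ) * (128 * d / (9 * t ^ 2)) + δ * (1 / t)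
        = ((t - δ) * (128 * d) + 9 * t * δ) / (9 * t ^ 2) := by
      field_simp
    rw [hcomb, div_le_iff₀ h9t2]
    rcases le_or_gt (9 * t) (128 * d) with hcs | hcs
    · -- 9t ≤ 128 d
      have h8 : 8 * d ≤ 9 * ρ * t := by
        nlinarith [mul_le_mul_of_nonneg_right hcase.le hd0]
      nlinarith [mul_le_mul_of_nonneg_right h8 ht.le, mul_nonneg hδ0 (by linarith : (0:ℝ) ≤ 128 * d - 9 * t)]
    · -- 128 d < 9t
      have h9 : ρ * d ≤ ρ * (9 * t / 128) :=
        mul_le_mul_of_nonneg_left (by linarith) hρ0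
      have h128 : 128 * d ≤ 137 * ρ * t := by nlinarith
      nlinarith [mul_le_mul_of_nonneg_right h128 ht.le,
        mul_le_mul_of_nonneg_right hδ2d (by linarith : (0:ℝ) ≤ 9 * t - 128 * d)]
  rw [ht_def]
  calc ‖((1 - az ^ 2 : ℝ) : ℂ) * g z - ((1 - aw ^ 2 : ℝ) : ℂ) * g w‖
      ≤ ‖((1 - az ^ 2 : ℝ) : ℂ) * (g z - g w)‖
        + ‖(((aw ^ 2 - az ^ 2 : ℝ)) : ℂ) * g w‖ := by
        rw [hsplit]; exact norm_add_le _ _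
    _ = (t - δ) * ‖g z - g w‖ + δ * ‖g w‖ := by rw [habs1, habs2]
    _ ≤ (t - δ) * (128 * d / (9 * t ^ 2)) + δ * (1 / t) := hmain
    _ ≤ 18 * ρ := halg

theorem flat_le_18_rho (z w : ℂ) (hz : ‖z‖ < 1) (hw : ‖w‖ < 1) :
    sSup {x : ℝ | ∃ f : ℂ → ℂ, DifferentiableOn ℂ f (ball (0 : ℂ) 1) ∧
          (∀ ζ : ℂ, ‖ζ‖ < 1 → (1 - ‖ζ‖ ^ 2) * ‖deriv f ζ‖ ≤ 1) ∧
          x = ‖((1 - ‖z‖ ^ 2 : ℝ) : ℂ) * deriv f z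
            - ((1 - ‖w‖ ^ 2 : ℝ) : ℂ) * deriv f w‖}
      ≤ 18 * ‖(z - w) / (1 - (starRingEnd ℂ) w * z)‖ := by
  apply Real.sSup_le
  · rintro x ⟨f, hf, hb, rfl⟩
    rcases le_total (‖w‖) (‖z‖) with h | h
    · exact key_est hf hb hz hw h
    · have h1 := key_est hf hb hw hz h
      have hswap : ‖(w - z) / (1 - (starRingEnd ℂ) z * w)‖
          = ‖(z - w) / (1 - (starRingEnd ℂ) w * z)‖ := by
        rw [norm_div, norm_div, norm_sub_rev w z]
        congr 1
        have hc : (starRingEnd ℂ) (1 - (starRingEnd ℂ) w * z) = 1 - (starRingEnd ℂ) z * w := by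
          rw [map_sub, map_one, map_mul, Complex.conj_conj, mul_comm]
        rw [← hc, Complex.norm_conj]
      calc ‖((1 - ‖z‖ ^ 2 : ℝ) : ℂ) * deriv f z
            - ((1 - ‖w‖ ^ 2 : ℝ) : ℂ) * deriv f w‖
          = ‖((1 - ‖w‖ ^ 2 : ℝ) : ℂ) * deriv f w
            - ((1 - ‖z‖ ^ 2 : ℝ) : ℂ) * deriv f z‖ := norm_sub_rev _ _
        _ ≤ 18 * ‖(w - z) / (1 - (starRingEnd ℂ) z * w)‖ := h1
        _ = 18 * ‖(z - w) / (1 - (starRingEnd ℂ) w * z)‖ := by rw [hswap]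
  · positivity
end

section
/- For any z, w in the open unit disk, sup over f analytic with |f| ≤ 1 on D of |f(z) - f(w)| equals (2 - 2√(1 - ρ(z,w)^2))/ρ(z,w) when z ≠ w, and this quantity is at most 2 ρ(z,w). -/
open Complex Metric Set Function

noncomputable def Complex.abs : AbsoluteValue ℂ ℝ where
  toFun z := ‖z‖
  map_mul' := norm_mul
  nonneg' := norm_nonneg
  eq_zero' _ := norm_eq_zero
  add_le' := norm_add_le

lemma Complex.abs.nonneg (z : ℂ) : 0 ≤ Complex.abs z := norm_nonneg z

lemma Complex.abs.pos {z : ℂ} (hz : z ≠ 0) : 0 < Complex.abs z := norm_pos_iff.mpr hz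

lemma Complex.abs.sub_le_add (a b : ℂ) : Complex.abs (a - b) ≤ Complex.abs a + Complex.abs b :=
  norm_sub_le a b

lemma Complex.abs_conj (z : ℂ) : Complex.abs ((starRingEnd ℂ) z) = Complex.abs z :=
  Complex.norm_conj z

lemma Complex.abs_ofReal (r : ℝ) : Complex.abs (r : ℂ) = |r| := Complex.norm_real r

lemma Complex.norm_eq_abs (z : ℂ) : ‖z‖ = Complex.abs z := rfl

lemma Complex.sq_abs (z : ℂ) : Complex.abs z ^ 2 = Complex.normSq z := (Complex.normSq_eq_norm_sq z).symm

lemma Complex.normSq_eq_abs (z : ℂ) : Complex.normSq z = Complex.abs z ^ 2 := Complex.normSq_eq_norm_sq z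


lemma key_identity (a b : ℂ) :
    Complex.abs (1 - (starRingEnd ℂ) b * a) ^ 2
      = Complex.abs (a - b) ^ 2 + (1 - Complex.abs a ^ 2) * (1 - Complex.abs b ^ 2) := by
  have h : ∀ x : ℂ, Complex.abs x ^ 2 = x.re ^ 2 + x.im ^ 2 := fun x => by
    rw [Complex.sq_abs, Complex.normSq_apply]; ring
  simp only [h, Complex.sub_re, Complex.sub_im, Complex.one_re, Complex.one_im,
    Complex.mul_re, Complex.mul_im, Complex.conj_re, Complex.conj_im]
  ring

lemma sq_le_imp {x y : ℝ} (hx : 0 ≤ x) (hy : 0 ≤ y) (h : x ^ 2 ≤ y ^ 2) : x ≤ y := by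
  nlinarith

lemma mobius_le (a b : ℂ) (ha : Complex.abs a ≤ 1) (hb : Complex.abs b ≤ 1) :
    Complex.abs (a - b) ≤ Complex.abs (1 - (starRingEnd ℂ) b * a) := by
  have h := key_identity a b
  have h1 : (1 - Complex.abs a ^ 2) * (1 - Complex.abs b ^ 2) ≥ 0 := by
    have := Complex.abs.nonneg a; have := Complex.abs.nonneg b
    have : Complex.abs a ^ 2 ≤ 1 := by nlinarith
    have : Complex.abs b ^ 2 ≤ 1 := by nlinarith
    nlinarith
  exact sq_le_imp (Complex.abs.nonneg _) (Complex.abs.nonneg _) (by linarith)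

lemma mobius_lt (a b : ℂ) (ha : Complex.abs a < 1) (hb : Complex.abs b < 1) :
    Complex.abs (a - b) < Complex.abs (1 - (starRingEnd ℂ) b * a) := by
  have h := key_identity a b
  have h1 : (1 - Complex.abs a ^ 2) * (1 - Complex.abs b ^ 2) > 0 := by
    have := Complex.abs.nonneg a; have := Complex.abs.nonneg b
    have : Complex.abs a ^ 2 < 1 := by nlinarith
    have : Complex.abs b ^ 2 < 1 := by nlinarith
    nlinarith
  have h2 : Complex.abs (a - b) ^ 2 < Complex.abs (1 - (starRingEnd ℂ) b * a) ^ 2 := by linarith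
  nlinarith [Complex.abs.nonneg (a - b), Complex.abs.nonneg (1 - (starRingEnd ℂ) b * a)]

lemma denom_ne (a b : ℂ) (ha : Complex.abs a < 1) (hb : Complex.abs b ≤ 1) :
    (1 : ℂ) - (starRingEnd ℂ) b * a ≠ 0 := by
  intro h
  have h2 : Complex.abs ((starRingEnd ℂ) b * a) < 1 := by
    rw [map_mul, Complex.abs_conj]
    calc Complex.abs b * Complex.abs a ≤ 1 * Complex.abs a :=
          mul_le_mul_of_nonneg_right hb (Complex.abs.nonneg a)
      _ < 1 := by simpa using ha
  rw [sub_eq_zero] at h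
  rw [← h] at h2
  simp at h2



lemma schwarzA {F : ℂ → ℂ} (hd : DifferentiableOn ℂ F (ball 0 1))
    (hb : ∀ ζ : ℂ, Complex.abs ζ < 1 → Complex.abs (F ζ) ≤ 1) (h0 : F 0 = 0)
    {p : ℂ} (hp : Complex.abs p < 1) : Complex.abs (F p) ≤ Complex.abs p := by
  have hpball : p ∈ ball (0 : ℂ) 1 := by simpa [mem_ball, Complex.dist_eq, Complex.norm_eq_abs] using hp
  have key : ∀ R : ℝ, 1 < R → Complex.abs (F p) ≤ R * Complex.abs p := by
    intro R hR
    have maps : MapsTo F (ball 0 1) (ball (F 0) R) := by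
      intro ζ hζ
      rw [h0]
      rw [mem_ball, Complex.dist_eq] at hζ ⊢
      simp only [sub_zero] at hζ ⊢
      exact lt_of_le_of_lt (hb ζ hζ) hR
    have h := Complex.dist_le_div_mul_dist_of_mapsTo_ball hd (maps.mono_right ball_subset_closedBall) hpball
    rw [h0, Complex.dist_eq, Complex.dist_eq, sub_zero, sub_zero, div_one] at h
    exact h
  by_contra hcon
  push_neg at hcon
  rcases eq_or_lt_of_le (Complex.abs.nonneg p) with h0p | h0p
  · have := key 2 (by norm_num)
    rw [← h0p] at this hcon
    simp at this
    rw [this, map_zero] at hcon; linarith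
  · set R := (Complex.abs p + Complex.abs (F p)) / (2 * Complex.abs p) with hRdef
    have hR : 1 < R := by
      rw [hRdef, lt_div_iff₀ (by linarith)]
      linarith
    have h2 : R * Complex.abs p = (Complex.abs p + Complex.abs (F p)) / 2 := by
      rw [hRdef]; field_simp
    have := key R hR
    rw [h2] at this
    linarith



lemma denom_ne2 (a b : ℂ) (ha : Complex.abs a ≤ 1) (hb : Complex.abs b < 1) :
    (1 : ℂ) - (starRingEnd ℂ) b * a ≠ 0 := by
  intro h
  have h2 : Complex.abs ((starRingEnd ℂ) b * a) < 1 := by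
    rw [map_mul, Complex.abs_conj]
    calc Complex.abs b * Complex.abs a ≤ Complex.abs b * 1 :=
          mul_le_mul_of_nonneg_left ha (Complex.abs.nonneg b)
      _ < 1 := by simpa using hb
  rw [sub_eq_zero] at h
  rw [← h] at h2
  simp at h2

lemma memball {ζ : ℂ} : ζ ∈ ball (0:ℂ) 1 ↔ Complex.abs ζ < 1 := by
  simp [mem_ball, Complex.dist_eq, Complex.norm_eq_abs]

lemma schwarz_pick {f : ℂ → ℂ} (hd : DifferentiableOn ℂ f (ball 0 1))
    (hb : ∀ ζ : ℂ, Complex.abs ζ < 1 → Complex.abs (f ζ) ≤ 1)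
    {z w : ℂ} (hz : Complex.abs z < 1) (hw : Complex.abs w < 1) :
    Complex.abs (f z - f w) ≤
      Complex.abs ((z - w) / (1 - (starRingEnd ℂ) w * z)) *
        Complex.abs (1 - (starRingEnd ℂ) (f w) * f z) := by
  have hden : (1 : ℂ) - (starRingEnd ℂ) w * z ≠ 0 := denom_ne z w hz hw.le
  set p : ℂ := (z - w) / (1 - (starRingEnd ℂ) w * z) with hpdef
  have hp : Complex.abs p < 1 := by
    rw [hpdef, map_div₀, div_lt_one (by
      exact (Complex.abs.pos hden))]
    exact mobius_lt z w hz hw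
  set φ : ℂ → ℂ := fun ζ => (ζ + w) / (1 + (starRingEnd ℂ) w * ζ) with hφdef
  have hφden : ∀ ζ : ℂ, Complex.abs ζ < 1 → (1 : ℂ) + (starRingEnd ℂ) w * ζ ≠ 0 := by
    intro ζ hζ
    have := denom_ne ζ (-w) hζ (by simpa using hw.le)
    simpa [map_neg, neg_mul, sub_neg_eq_add] using this
  have hφmem : ∀ ζ : ℂ, Complex.abs ζ < 1 → Complex.abs (φ ζ) < 1 := by
    intro ζ hζ
    rw [hφdef]
    simp only
    rw [map_div₀, div_lt_one (Complex.abs.pos (hφden ζ hζ))]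
    have := mobius_lt ζ (-w) hζ (by simpa using hw)
    simpa [map_neg, neg_mul, sub_neg_eq_add] using this
  have hφmaps : MapsTo φ (ball 0 1) (ball 0 1) := by
    intro ζ hζ; rw [memball] at hζ ⊢; exact hφmem ζ hζ
  have hφdiff : DifferentiableOn ℂ φ (ball 0 1) := by
    apply DifferentiableOn.div
    · exact (differentiable_id.add_const w).differentiableOn
    · exact (differentiable_const _ |>.add ((differentiable_const _).mul differentiable_id)).differentiableOn
    · intro ζ hζ; exact hφden ζ (memball.mp hζ)
  have hφ0 : φ 0 = w := by rw [hφdef]; simp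
  have hφp : φ p = z := by
    rw [hφdef]
    simp only
    rw [div_eq_iff (hφden p hp), hpdef]
    have hden' : (1:ℂ) - z * (starRingEnd ℂ) w ≠ 0 := by rwa [mul_comm]
    field_simp
    ring
  have hgd : DifferentiableOn ℂ (f ∘ φ) (ball 0 1) := hd.comp hφdiff hφmaps
  have hgb : ∀ ζ : ℂ, Complex.abs ζ < 1 → Complex.abs (f (φ ζ)) ≤ 1 :=
    fun ζ hζ => hb _ (hφmem ζ hζ)
  rcases eq_or_lt_of_le (hb w hw) with hfw | hfw
  · -- |f w| = 1 : f is constant by maximum modulus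
    have hmax : IsMaxOn (norm ∘ f) (ball 0 1) w := by
      intro x hx
      simp only [comp_apply, Complex.norm_eq_abs]
      rw [hfw]
      exact hb x (memball.mp hx)
    have heq := Complex.eqOn_of_isPreconnected_of_isMaxOn_norm
      (convex_ball (0:ℂ) 1).isPreconnected isOpen_ball hd (memball.mpr hw) hmax
      (memball.mpr hz)
    rw [heq]
    simp only [const_apply, sub_self, map_zero]
    positivity
  · -- |f w| < 1
    set b : ℂ := f w with hbdef
    set F : ℂ → ℂ := fun ζ => (f (φ ζ) - b) / (1 - (starRingEnd ℂ) b * f (φ ζ)) with hFdef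
    have hFden : ∀ ζ : ℂ, Complex.abs ζ < 1 →
        (1 : ℂ) - (starRingEnd ℂ) b * f (φ ζ) ≠ 0 :=
      fun ζ hζ => denom_ne2 _ _ (hgb ζ hζ) hfw
    have hFd : DifferentiableOn ℂ F (ball 0 1) := by
      apply DifferentiableOn.div
      · exact hgd.sub_const b
      · exact (differentiableOn_const _).sub ((differentiableOn_const _).mul hgd)
      · intro ζ hζ; exact hFden ζ (memball.mp hζ)
    have hFb : ∀ ζ : ℂ, Complex.abs ζ < 1 → Complex.abs (F ζ) ≤ 1 := by
      intro ζ hζ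
      rw [hFdef]
      simp only
      rw [map_div₀, div_le_one (Complex.abs.pos (hFden ζ hζ))]
      exact mobius_le _ _ (hgb ζ hζ) (hb w hw)
    have hF0 : F 0 = 0 := by
      rw [hFdef]; simp only [hφ0, hbdef, sub_self, zero_div]
    have hkey := schwarzA hFd hFb hF0 hp
    rw [hFdef] at hkey
    simp only [hφp] at hkey
    rw [map_div₀, div_le_iff₀ (Complex.abs.pos (by
      have := hFden p hp; rwa [hφp] at this))] at hkey
    exact hkey



lemma sq_le_imp' {x y : ℝ} (hy : 0 ≤ y) (h : x ^ 2 ≤ y ^ 2) (hx : 0 ≤ x) : x ≤ y := by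
  nlinarith

lemma upper_bound' {d A B r s : ℝ} (hd0 : 0 ≤ d) (hA : 0 ≤ A) (hA1 : A ≤ 1)
    (hB : 0 ≤ B) (hB1 : B ≤ 1) (htri : d ≤ A + B) (hr : 0 < r) (hr1 : r < 1)
    (hs2 : s ^ 2 = 1 - r ^ 2) (hs0 : 0 < s)
    (hsp : d ^ 2 ≤ r ^ 2 * (d ^ 2 + (1 - A ^ 2) * (1 - B ^ 2))) :
    d ≤ (2 - 2 * s) / r := by
  have hA2 : A ^ 2 ≤ 1 := by nlinarith
  have hB2 : B ^ 2 ≤ 1 := by nlinarith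
  have e3 : (0:ℝ) ≤ (2 - A ^ 2 - B ^ 2) / 2 := by linarith
  have e1 : (1 - A ^ 2) * (1 - B ^ 2) ≤ ((2 - A ^ 2 - B ^ 2) / 2) ^ 2 := by
    nlinarith [sq_nonneg (A ^ 2 - B ^ 2)]
  have e2 : (2 - A ^ 2 - B ^ 2) / 2 ≤ 1 - d ^ 2 / 4 := by
    nlinarith [sq_nonneg (A - B), mul_self_le_mul_self hd0 htri]
  have step1 : (1 - A ^ 2) * (1 - B ^ 2) ≤ (1 - d ^ 2 / 4) ^ 2 :=
    le_trans e1 (pow_le_pow_left₀ e3 e2 2)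
  have step2 : (d * s) ^ 2 ≤ (r * (1 - d ^ 2 / 4)) ^ 2 := by
    have := mul_le_mul_of_nonneg_left step1 (sq_nonneg r)
    nlinarith
  have step3 : d * s ≤ r * (1 - d ^ 2 / 4) := by
    have hd2 : d ≤ 2 := by linarith
    refine sq_le_imp' (by nlinarith) step2 (by positivity)
  rw [le_div_iff₀ hr]
  have H : r * (d * s) ≤ r * (r * (1 - d ^ 2 / 4)) := mul_le_mul_of_nonneg_left step3 hr.le
  have H1 : r * (d * s) ≤ r ^ 2 - r ^ 2 * d ^ 2 / 4 := by
    rw [show r ^ 2 - r ^ 2 * d ^ 2 / 4 = r * (r * (1 - d ^ 2 / 4)) from by ring]; exact H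
  have e5 : (2 * s + r * d) ^ 2 ≤ 2 ^ 2 := by
    rw [show (2 * s + r * d) ^ 2 = 4 * s ^ 2 + 4 * (r * (d * s)) + r ^ 2 * d ^ 2 from by ring]
    linarith [H1, hs2]
  have e6 : 2 * s + r * d ≤ 2 := sq_le_imp' (by norm_num) e5 (by positivity)
  linarith

lemma upper_bound {d A B r : ℝ} (hd0 : 0 ≤ d) (hA : 0 ≤ A) (hA1 : A ≤ 1)
    (hB : 0 ≤ B) (hB1 : B ≤ 1) (htri : d ≤ A + B) (hr : 0 < r) (hr1 : r < 1)
    (hsp : d ^ 2 ≤ r ^ 2 * (d ^ 2 + (1 - A ^ 2) * (1 - B ^ 2))) :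
    d ≤ (2 - 2 * Real.sqrt (1 - r ^ 2)) / r :=
  upper_bound' hd0 hA hA1 hB hB1 htri hr hr1
    (Real.sq_sqrt (by nlinarith)) (Real.sqrt_pos.mpr (by nlinarith)) hsp



lemma extremal {z w : ℂ} (hz : Complex.abs z < 1) (hw : Complex.abs w < 1) (hne : z ≠ w) :
    ∃ f : ℂ → ℂ, DifferentiableOn ℂ f (ball 0 1) ∧
      (∀ ζ : ℂ, Complex.abs ζ < 1 → Complex.abs (f ζ) ≤ 1) ∧
      Complex.abs (f z - f w)
        = (2 - 2 * Real.sqrt (1 - Complex.abs ((z - w) / (1 - (starRingEnd ℂ) w * z)) ^ 2))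
            / Complex.abs ((z - w) / (1 - (starRingEnd ℂ) w * z)) := by
  have hden : (1 : ℂ) - (starRingEnd ℂ) w * z ≠ 0 := denom_ne z w hz hw.le
  set p : ℂ := (z - w) / (1 - (starRingEnd ℂ) w * z) with hpdef
  have hpne : p ≠ 0 := div_ne_zero (sub_ne_zero.mpr hne) hden
  have hρ0 : 0 < Complex.abs p := Complex.abs.pos hpne
  have hρ1 : Complex.abs p < 1 := by
    rw [hpdef, map_div₀, div_lt_one (Complex.abs.pos hden)]
    exact mobius_lt z w hz hw
  obtain ⟨ρ, hρdef⟩ : ∃ ρ : ℝ, Complex.abs p = ρ := ⟨_, rfl⟩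
  rw [hρdef] at hρ0 hρ1
  have hs2 : Real.sqrt (1 - ρ ^ 2) ^ 2 = 1 - ρ ^ 2 := Real.sq_sqrt (by nlinarith)
  have hs0 : 0 < Real.sqrt (1 - ρ ^ 2) := Real.sqrt_pos.mpr (by nlinarith)
  obtain ⟨s, hsdef⟩ : ∃ s : ℝ, Real.sqrt (1 - ρ ^ 2) = s := ⟨_, rfl⟩
  rw [hsdef] at hs2 hs0
  have hs1 : s < 1 := by nlinarith
  have h1s : 1 - s < ρ := by nlinarith
  obtain ⟨κ, hκdef⟩ : ∃ κ : ℝ, (1 - s) / ρ ^ 2 = κ := ⟨_, rfl⟩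
  have hκ0 : 0 ≤ κ := by rw [← hκdef]; exact div_nonneg (by linarith) (by positivity)
  have hκρ2 : κ * ρ ^ 2 = 1 - s := by rw [← hκdef]; field_simp
  have hκρ1 : κ * ρ < 1 := by
    rw [← hκdef]
    rw [div_mul_eq_mul_div, mul_comm, ← div_mul_eq_mul_div]
    calc ρ / ρ ^ 2 * (1 - s) = (1 - s) / ρ := by field_simp
      _ < 1 := by rw [div_lt_one hρ0]; exact h1s
  set τ : ℂ := (κ : ℝ) * p with hτdef
  have hτabs : Complex.abs τ = κ * ρ := by
    rw [hτdef, map_mul, Complex.abs_ofReal, _root_.abs_of_nonneg hκ0, hρdef]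
  have hτ1 : Complex.abs τ < 1 := by rw [hτabs]; exact hκρ1
  set φ : ℂ → ℂ := fun ζ => (ζ - w) / (1 - (starRingEnd ℂ) w * ζ) with hφdef
  have hφmem : ∀ ζ : ℂ, Complex.abs ζ < 1 → Complex.abs (φ ζ) < 1 := by
    intro ζ hζ
    rw [hφdef]
    simp only
    rw [map_div₀, div_lt_one (Complex.abs.pos (denom_ne ζ w hζ hw.le))]
    exact mobius_lt ζ w hζ hw
  have hfden : ∀ ζ : ℂ, Complex.abs ζ < 1 → (1 : ℂ) - (starRingEnd ℂ) τ * φ ζ ≠ 0 :=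
    fun ζ hζ => denom_ne (φ ζ) τ (hφmem ζ hζ) hτ1.le
  refine ⟨fun ζ => (φ ζ - τ) / (1 - (starRingEnd ℂ) τ * φ ζ), ?_, ?_, ?_⟩
  · apply DifferentiableOn.div
    · apply DifferentiableOn.sub_const
      apply DifferentiableOn.div
      · exact (differentiable_id.sub_const w).differentiableOn
      · exact ((differentiable_const _).sub ((differentiable_const _).mul differentiable_id)).differentiableOn
      · intro ζ hζ; exact denom_ne ζ w (memball.mp hζ) hw.le
    · apply DifferentiableOn.const_sub
      apply DifferentiableOn.const_mul
      apply DifferentiableOn.div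
      · exact (differentiable_id.sub_const w).differentiableOn
      · exact ((differentiable_const _).sub ((differentiable_const _).mul differentiable_id)).differentiableOn
      · intro ζ hζ; exact denom_ne ζ w (memball.mp hζ) hw.le
    · intro ζ hζ; exact hfden ζ (memball.mp hζ)
  · intro ζ hζ
    rw [map_div₀, div_le_one (Complex.abs.pos (hfden ζ hζ))]
    exact mobius_le _ _ (hφmem ζ hζ).le hτ1.le
  · have hφw : φ w = 0 := by rw [hφdef]; simp
    have hφz : φ z = p := rfl
    have hfw : (φ w - τ) / (1 - (starRingEnd ℂ) τ * φ w) = -τ := by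
      simp [hφw]
    have hconjp : (starRingEnd ℂ) p * p = ((ρ ^ 2 : ℝ) : ℂ) := by
      rw [mul_comm, Complex.mul_conj, Complex.normSq_eq_abs, hρdef]
    have hconjτ : (starRingEnd ℂ) τ * p = ((κ * ρ ^ 2 : ℝ) : ℂ) := by
      rw [hτdef, map_mul, Complex.conj_ofReal, mul_assoc, hconjp]
      push_cast; ring
    have hdenval : (1 : ℂ) - (starRingEnd ℂ) τ * φ z = ((s : ℝ) : ℂ) := by
      rw [hφz, hconjτ, hκρ2]; push_cast; ring
    have hsC : ((s : ℝ) : ℂ) ≠ 0 := Complex.ofReal_ne_zero.mpr hs0.ne'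
    have hval : (φ z - τ) / (1 - (starRingEnd ℂ) τ * φ z)
        - (φ w - τ) / (1 - (starRingEnd ℂ) τ * φ w)
        = p * (((1 - κ + κ * s) / s : ℝ) : ℂ) := by
      rw [hfw, hdenval, hφz, hτdef]
      push_cast
      field_simp
      ring
    rw [hval, map_mul, Complex.abs_ofReal, hρdef, ← hsdef, hsdef]
    have hnum : 0 ≤ (1 - κ + κ * s) / s := by
      have : κ * (1 - s) < 1 := by
        nlinarith [hκρ2, h1s, hs1, hκ0]
      have h2 : 0 < 1 - κ + κ * s := by nlinarith
      positivity
    rw [_root_.abs_of_nonneg hnum]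
    field_simp
    linear_combination (s - 1) * hκρ2 + hs2

theorem sup_diff_Hinfty_abs (z w : ℂ) (hz : Complex.abs z < 1) (hw : Complex.abs w < 1) :
    (z ≠ w →
      sSup {x : ℝ | ∃ f : ℂ → ℂ, DifferentiableOn ℂ f (ball (0 : ℂ) 1) ∧
          (∀ ζ : ℂ, Complex.abs ζ < 1 → Complex.abs (f ζ) ≤ 1) ∧
          x = Complex.abs (f z - f w)}
        = (2 - 2 * Real.sqrt (1 - Complex.abs ((z - w) / (1 - (starRingEnd ℂ) w * z)) ^ 2))
            / Complex.abs ((z - w) / (1 - (starRingEnd ℂ) w * z))) ∧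
    sSup {x : ℝ | ∃ f : ℂ → ℂ, DifferentiableOn ℂ f (ball (0 : ℂ) 1) ∧
          (∀ ζ : ℂ, Complex.abs ζ < 1 → Complex.abs (f ζ) ≤ 1) ∧
          x = Complex.abs (f z - f w)}
      ≤ 2 * Complex.abs ((z - w) / (1 - (starRingEnd ℂ) w * z)) := by
  have hden : (1 : ℂ) - (starRingEnd ℂ) w * z ≠ 0 := denom_ne z w hz hw.le
  have hρ1 : Complex.abs ((z - w) / (1 - (starRingEnd ℂ) w * z)) < 1 := by
    rw [map_div₀, div_lt_one (Complex.abs.pos hden)]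
    exact mobius_lt z w hz hw
  have hρnn : 0 ≤ Complex.abs ((z - w) / (1 - (starRingEnd ℂ) w * z)) := Complex.abs.nonneg _
  have hmem0 : (0 : ℝ) ∈ {x : ℝ | ∃ f : ℂ → ℂ, DifferentiableOn ℂ f (ball (0 : ℂ) 1) ∧
      (∀ ζ : ℂ, Complex.abs ζ < 1 → Complex.abs (f ζ) ≤ 1) ∧
      x = Complex.abs (f z - f w)} := by
    refine ⟨fun _ => 0, differentiableOn_const 0, fun ζ _ => by simp, by simp⟩
  have hne : {x : ℝ | ∃ f : ℂ → ℂ, DifferentiableOn ℂ f (ball (0 : ℂ) 1) ∧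
      (∀ ζ : ℂ, Complex.abs ζ < 1 → Complex.abs (f ζ) ≤ 1) ∧
      x = Complex.abs (f z - f w)}.Nonempty := ⟨0, hmem0⟩
  have hub2 : ∀ x ∈ {x : ℝ | ∃ f : ℂ → ℂ, DifferentiableOn ℂ f (ball (0 : ℂ) 1) ∧
      (∀ ζ : ℂ, Complex.abs ζ < 1 → Complex.abs (f ζ) ≤ 1) ∧
      x = Complex.abs (f z - f w)},
      x ≤ 2 * Complex.abs ((z - w) / (1 - (starRingEnd ℂ) w * z)) := by
    rintro x ⟨f, hfd, hfb, rfl⟩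
    have hsp := schwarz_pick hfd hfb hz hw
    have hE : Complex.abs (1 - (starRingEnd ℂ) (f w) * f z) ≤ 2 := by
      calc Complex.abs (1 - (starRingEnd ℂ) (f w) * f z)
          ≤ Complex.abs 1 + Complex.abs ((starRingEnd ℂ) (f w) * f z) := by
            exact Complex.abs.sub_le_add _ _
        _ ≤ 1 + 1 := by
            rw [map_one]
            gcongr
            rw [map_mul, Complex.abs_conj]
            exact mul_le_one₀ (hfb w hw) (Complex.abs.nonneg _) (hfb z hz)
        _ = 2 := by norm_num
    calc Complex.abs (f z - f w)
        ≤ Complex.abs ((z - w) / (1 - (starRingEnd ℂ) w * z)) *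
            Complex.abs (1 - (starRingEnd ℂ) (f w) * f z) := hsp
      _ ≤ Complex.abs ((z - w) / (1 - (starRingEnd ℂ) w * z)) * 2 := by
          exact mul_le_mul_of_nonneg_left hE hρnn
      _ = 2 * Complex.abs ((z - w) / (1 - (starRingEnd ℂ) w * z)) := by ring
  have hbdd : BddAbove {x : ℝ | ∃ f : ℂ → ℂ, DifferentiableOn ℂ f (ball (0 : ℂ) 1) ∧
      (∀ ζ : ℂ, Complex.abs ζ < 1 → Complex.abs (f ζ) ≤ 1) ∧
      x = Complex.abs (f z - f w)} :=
    ⟨2 * Complex.abs ((z - w) / (1 - (starRingEnd ℂ) w * z)), fun x hx => hub2 x hx⟩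
  constructor
  · intro hzw
    have hρ0 : 0 < Complex.abs ((z - w) / (1 - (starRingEnd ℂ) w * z)) :=
      Complex.abs.pos (div_ne_zero (sub_ne_zero.mpr hzw) hden)
    apply le_antisymm
    · apply csSup_le hne
      rintro x ⟨f, hfd, hfb, rfl⟩
      have hsp := schwarz_pick hfd hfb hz hw
      have hid := key_identity (f z) (f w)
      have hd0 : 0 ≤ Complex.abs (f z - f w) := Complex.abs.nonneg _
      have hsq : Complex.abs (f z - f w) ^ 2 ≤
          Complex.abs ((z - w) / (1 - (starRingEnd ℂ) w * z)) ^ 2 *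
            (Complex.abs (f z - f w) ^ 2 +
              (1 - Complex.abs (f z) ^ 2) * (1 - Complex.abs (f w) ^ 2)) := by
        have h1 : Complex.abs (f z - f w) ^ 2 ≤
            (Complex.abs ((z - w) / (1 - (starRingEnd ℂ) w * z)) *
              Complex.abs (1 - (starRingEnd ℂ) (f w) * f z)) ^ 2 := by
          apply pow_le_pow_left₀ hd0 hsp
        calc Complex.abs (f z - f w) ^ 2
            ≤ (Complex.abs ((z - w) / (1 - (starRingEnd ℂ) w * z)) *
              Complex.abs (1 - (starRingEnd ℂ) (f w) * f z)) ^ 2 := h1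
          _ = Complex.abs ((z - w) / (1 - (starRingEnd ℂ) w * z)) ^ 2 *
              Complex.abs (1 - (starRingEnd ℂ) (f w) * f z) ^ 2 := by ring
          _ = _ := by rw [hid]
      have htri : Complex.abs (f z - f w) ≤ Complex.abs (f z) + Complex.abs (f w) :=
        Complex.abs.sub_le_add _ _
      exact upper_bound hd0 (Complex.abs.nonneg _) (hfb z hz) (Complex.abs.nonneg _)
        (hfb w hw) htri hρ0 hρ1 hsq
    · obtain ⟨f, hfd, hfb, hval⟩ := extremal hz hw hzw
      exact le_csSup hbdd ⟨f, hfd, hfb, hval.symm⟩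
  · exact csSup_le hne hub2

theorem sup_diff_Hinfty (z w : ℂ) (hz : ‖z‖ < 1) (hw : ‖w‖ < 1) :
    (z ≠ w →
      sSup {x : ℝ | ∃ f : ℂ → ℂ, DifferentiableOn ℂ f (ball (0 : ℂ) 1) ∧
          (∀ ζ : ℂ, ‖ζ‖ < 1 → ‖f ζ‖ ≤ 1) ∧
          x = ‖f z - f w‖}
        = (2 - 2 * Real.sqrt (1 - ‖(z - w) / (1 - (starRingEnd ℂ) w * z)‖ ^ 2))
            / ‖(z - w) / (1 - (starRingEnd ℂ) w * z)‖) ∧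
    sSup {x : ℝ | ∃ f : ℂ → ℂ, DifferentiableOn ℂ f (ball (0 : ℂ) 1) ∧
          (∀ ζ : ℂ, ‖ζ‖ < 1 → ‖f ζ‖ ≤ 1) ∧
          x = ‖f z - f w‖}
      ≤ 2 * ‖(z - w) / (1 - (starRingEnd ℂ) w * z)‖ := by
  exact sup_diff_Hinfty_abs z w hz hw
end
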